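/- For every prime p and integer d ≥ 1, let G_2(d,p) be the graph whose vertices are the self-orthogonal vectors of F_p^d (vectors v with ⟨v,v⟩ = 0), with two distinct vertices adjacent iff they are not orthogonal. Then the minrank of the complement of G_2(d,p) over F_p is at most C(d+p-2, p-1) + 1. -/

import Mathlib

/-- A matrix `M` over a field `F` represents a simple graph `G` if all diagonal entries are
nonzero and entries at distinct non-adjacent pairs of vertices are zero. -/
def Represents {V F : Type*} [Field F] (G : SimpleGraph V) (M : Matrix V V F) : Prop :=
  (∀ v, M v v ≠ 0) ∧ ∀ u v : V, u ≠ v → ¬G.Adj u v → M u v = 0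

/-- The minrank of a simple graph `G` over a field `F`. -/
noncomputable def minrank (F : Type*) [Field F] {V : Type*} [Fintype V] [DecidableEq V]
    (G : SimpleGraph V) : ℕ :=
  sInf {r : ℕ | ∃ M : Matrix V V F, Represents G M ∧ M.rank = r}

/-- The graph `G₂(d, p)`: vertices are the self-orthogonal vectors of `F_p^d`, with two
distinct vertices adjacent iff they are not orthogonal. -/
def selfOrthoGraph (d p : ℕ) : SimpleGraph {v : Fin d → ZMod p // ∑ i, v i * v i = 0} where
  Adj u v := u ≠ v ∧ ∑ i, u.1 i * v.1 i ≠ 0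
  symm := ⟨fun u v h => ⟨h.1.symm, by simpa [mul_comm] using h.2⟩⟩
  loopless := ⟨fun v h => h.1 rfl⟩

/-- For every prime `p` and `d ≥ 1`, the minrank of the complement of `G₂(d, p)` over `F_p`
is at most `C(d + p - 2, p - 1) + 1`. -/
theorem minrank_compl_selfOrthoGraph_le (p : ℕ) [Fact p.Prime] (d : ℕ) (hd : 1 ≤ d) :
    minrank (ZMod p) (selfOrthoGraph d p)ᶜ ≤ (d + p - 2).choose (p - 1) + 1 := by
  classical
  have hp : p.Prime := Fact.out
  set n : ℕ := p - 1 with hn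
  have hn1 : 1 ≤ n := Nat.le_sub_one_of_lt hp.one_lt
  set V := {v : Fin d → ZMod p // ∑ i, v i * v i = 0}
  set M : Matrix V V (ZMod p) := fun u v => 1 - (∑ i, u.1 i * v.1 i) ^ n with hM
  -- Represents
  have hrep : Represents (selfOrthoGraph d p)ᶜ M := by
    constructor
    · intro v
      simp only [hM, hn, v.2, zero_pow (by omega : p - 1 ≠ 0), sub_zero]
      exact one_ne_zero
    · intro u v huv hadj
      have hne : (∑ i, u.1 i * v.1 i) ≠ 0 := by
        intro h
        exact hadj ⟨huv, fun hG => (hG : u ≠ v ∧ ∑ i, u.1 i * v.1 i ≠ 0).2 h⟩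
      have := ZMod.pow_card_sub_one_eq_one hne
      simp only [hM, hn, this, sub_self]
  -- rank bound via factorization
  set A : Matrix V (Option (Sym (Fin d) n)) (ZMod p) := fun u k =>
    k.elim 1 (fun m => -((m.1.countPerms : ZMod p) * (m.1.map u.1).prod)) with hA
  set B : Matrix (Option (Sym (Fin d) n)) V (ZMod p) := fun k v =>
    k.elim 1 (fun m => (m.1.map v.1).prod) with hB
  have hfac : M = A * B := by
    funext u v
    rw [Matrix.mul_apply]
    simp only [hM, Matrix.mul_apply, hA, hB]
    rw [Fintype.sum_option]
    simp only [Option.elim, mul_one, one_mul]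
    have hsp : (∑ i, u.1 i * v.1 i) ^ n
        = ∑ m ∈ (Finset.univ : Finset (Fin d)).sym n,
            (m.1.countPerms : ZMod p) * (m.1.map (fun i => u.1 i * v.1 i)).prod := by
      simpa using Finset.sum_pow (s := (Finset.univ : Finset (Fin d)))
        (fun i => u.1 i * v.1 i) n
    rw [Finset.sym_univ] at hsp
    rw [hsp, sub_eq_add_neg, ← Finset.sum_neg_distrib]
    congr 1
    apply Finset.sum_congr rfl
    intro m _
    rw [neg_mul, mul_assoc, ← Multiset.prod_map_mul]
  have hrank : M.rank ≤ (d + p - 2).choose (p - 1) + 1 := by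
    rw [hfac]
    refine (Matrix.rank_mul_le_left A B).trans ?_
    refine (Matrix.rank_le_card_width A).trans ?_
    rw [Fintype.card_option, Sym.card_sym_eq_choose, Fintype.card_fin]
    have : d + n - 1 = d + p - 2 := by omega
    rw [this, hn]
  refine le_trans (Nat.sInf_le ⟨M, hrep, rfl⟩) hrank
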